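/- Let S ⊆ ℝ^D be compact, f : S → ℝ be C¹ with finitely many critical points, all isolated and in the interior of S, and let f_n : S → ℝ be differentiable with f_n → f and ∇f_n → ∇f uniformly. If the critical point resolution R({f_n}) := liminf_{n→∞} inf{|p₁ − p₂| : p₁ ≠ p₂ critical points of f_n} is strictly positive, then limsup_{n→∞} N_C(f_n) ≤ N_C(f), where N_C(g) is the number of critical points of g. -/

import Mathlib

open Filter Topology Metric

/-- critical point upper bound. If `fₙ → f` in the `C¹` sense on a compact set,
`f` has finitely many critical points, all interior and isolated, and the critical point
resolution of `{fₙ}` is bounded below, then `limsup N_C(fₙ) ≤ N_C(f)`. -/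
theorem stmt3 {D : ℕ} (S : Set (EuclideanSpace ℝ (Fin D))) (hS : IsCompact S)
    (f : ℕ → EuclideanSpace ℝ (Fin D) → ℝ) (g : EuclideanSpace ℝ (Fin D) → ℝ)
    (hg : ContDiff ℝ 1 g) (hf : ∀ n, Differentiable ℝ (f n))
    (hconv : TendstoUniformlyOn f g atTop S)
    (hconv' : TendstoUniformlyOn (fun n s => fderiv ℝ (f n) s) (fderiv ℝ g) atTop S)
    (hfin : {s ∈ S | fderiv ℝ g s = 0}.Finite)
    (hint : ∀ s ∈ S, fderiv ℝ g s = 0 → s ∈ interior S)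
    (hiso : ∀ p ∈ S, fderiv ℝ g p = 0 →
      ∃ ε > 0, ∀ q ∈ S, fderiv ℝ g q = 0 → q ∈ ball p ε → q = p)
    (hres : ∃ ε > 0, ∀ᶠ n in atTop,
      ∀ p₁ ∈ S, ∀ p₂ ∈ S, fderiv ℝ (f n) p₁ = 0 → fderiv ℝ (f n) p₂ = 0 →
        p₁ ≠ p₂ → ε ≤ dist p₁ p₂) :
    Filter.atTop.limsup (fun n => {s ∈ S | fderiv ℝ (f n) s = 0}.encard) ≤
      {s ∈ S | fderiv ℝ g s = 0}.encard := by
  obtain ⟨ε, hε, hres⟩ := hres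
  set T := {s ∈ S | fderiv ℝ g s = 0} with hT
  set U := ⋃ p ∈ T, ball p (ε / 3) with hU
  have hUopen : IsOpen U := isOpen_biUnion fun _ _ => isOpen_ball
  -- eventually all critical points of f n lie in U
  have key : ∀ᶠ n in atTop, ∀ s ∈ S, fderiv ℝ (f n) s = 0 → s ∈ U := by
    by_cases hC : (S \ U).Nonempty
    · obtain ⟨s₀, hs₀, hmin⟩ := (hS.diff hUopen).exists_isMinOn hC
        ((hg.continuous_fderiv one_ne_zero).norm.continuousOn)
      have hm : 0 < ‖fderiv ℝ g s₀‖ := by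
        rw [norm_pos_iff]
        intro h0
        exact hs₀.2 (Set.mem_biUnion ⟨hs₀.1, h0⟩ (mem_ball_self (by linarith)))
      filter_upwards [(Metric.tendstoUniformlyOn_iff.mp hconv') _ hm] with n hn s hsS hcrit
      by_contra hsU
      have hsC : s ∈ S \ U := ⟨hsS, hsU⟩
      have h1 : ‖fderiv ℝ g s₀‖ ≤ ‖fderiv ℝ g s‖ := hmin hsC
      have h2 := hn s hsS
      rw [hcrit, dist_zero_right] at h2
      linarith
    · have : S ⊆ U := by
        intro s hs
        by_contra h
        exact hC ⟨s, hs, h⟩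
      exact Filter.Eventually.of_forall fun n s hs _ => this hs
  refine Filter.limsup_le_of_le (by isBoundedDefault) ?_
  filter_upwards [key, hres] with n hkey hresn
  classical
  set A := {s ∈ S | fderiv ℝ (f n) s = 0} with hA
  have hex : ∀ s ∈ A, ∃ p, p ∈ T ∧ dist s p < ε / 3 := by
    intro s hs
    have := hkey s hs.1 hs.2
    rw [hU, Set.mem_iUnion₂] at this
    obtain ⟨p, hp, hball⟩ := this
    exact ⟨p, hp, mem_ball.mp hball⟩
  set φ : EuclideanSpace ℝ (Fin D) → EuclideanSpace ℝ (Fin D) :=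
    fun s => if h : ∃ p, p ∈ T ∧ dist s p < ε / 3 then h.choose else s with hφ
  have hφmem : ∀ s ∈ A, φ s ∈ T ∧ dist s (φ s) < ε / 3 := by
    intro s hs
    have h := hex s hs
    simp only [hφ, dif_pos h]
    exact ⟨h.choose_spec.1, h.choose_spec.2⟩
  have hinj : Set.InjOn φ A := by
    intro s₁ h₁ s₂ h₂ heq
    by_contra hne
    have hd := hresn s₁ h₁.1 s₂ h₂.1 h₁.2 h₂.2 hne
    have d₁ := (hφmem s₁ h₁).2
    have d₂ := (hφmem s₂ h₂).2
    have : dist s₁ s₂ ≤ dist s₁ (φ s₁) + dist (φ s₂) s₂ := by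
      rw [heq]; exact dist_triangle _ _ _
    rw [dist_comm (φ s₂) s₂] at this
    linarith
  calc A.encard = (φ '' A).encard := (hinj.encard_image).symm
    _ ≤ T.encard := Set.encard_le_encard (by
        rintro _ ⟨s, hs, rfl⟩
        exact (hφmem s hs).1)
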